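/- Let m ≥ 5 be odd, h = (m−1)/2, and A = {1, 2, …, 2^{h−1} − 1}. For any i, j ∈ A with i ≠ j, the 2-cyclotomic cosets modulo 2^m − 1 satisfy C_{i+2^h} ∩ C_{j+2^h} = ∅. -/

import Mathlib

/-- The 2-cyclotomic coset of i modulo v:
    C_i = {i·2^s mod v : s = 0, 1, 2, …} ⊆ Z_v. -/
def cosetC (v i : ℕ) : Set ℕ := {x | ∃ s : ℕ, x = i * 2 ^ s % v}

lemma aux7 (h i j u : ℕ) (hh2 : 2 ≤ h) (hi1 : 1 ≤ i) (hi2 : i < 2^(h-1)) (hj2 : j < 2^(h-1))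
    (hu : u ≤ 2*h)
    (heq : i + 2^h = ((j + 2^h) * 2^u) % (2^(2*h+1) - 1)) : i = j := by
  have hpow : ∀ a b : ℕ, a ≤ b → (2:ℕ)^a ≤ 2^b := fun a b hab =>
    Nat.pow_le_pow_right (by norm_num) hab
  have h56 : 2 * 2^(h-1) = 2^h := by
    rw [← pow_succ']; congr 1; omega
  have h57 : (2:ℕ)^(h+1) = 2 * 2^h := by rw [pow_succ]; ring
  rcases Nat.lt_or_ge u 1 with hu0 | hu1
  · -- u = 0
    have hu0' : u = 0 := by omega
    subst hu0'
    rw [pow_zero, mul_one] at heq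
    have h1 : (2:ℕ)^(h+2) ≤ 2^(2*h+1) := hpow _ _ (by omega)
    have h2 : (2:ℕ)^(h+2) = 4 * 2^h := by rw [pow_add]; ring
    have hlt : j + 2^h < 2^(2*h+1) - 1 := by omega
    rw [Nat.mod_eq_of_lt hlt] at heq
    omega
  rcases Nat.lt_or_ge u (h+1) with hu2 | hu3
  · -- 1 ≤ u ≤ h
    exfalso
    have hA : j + 2^h + 1 ≤ 2^(h+1) := by omega
    have hXlt : (j + 2^h) * 2^u ≤ 2^(h+1+u) - 2^u := by
      calc (j + 2^h) * 2^u ≤ (2^(h+1) - 1) * 2^u :=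
            Nat.mul_le_mul_right _ (by omega)
        _ = 2^(h+1) * 2^u - 1 * 2^u := by rw [Nat.sub_mul]
        _ = 2^(h+1+u) - 2^u := by rw [one_mul, ← pow_add]
    have hXge : 2^(h+1) ≤ (j + 2^h) * 2^u := by
      calc (2:ℕ)^(h+1) ≤ 2^(h+u) := hpow _ _ (by omega)
        _ = 2^h * 2^u := pow_add 2 h u
        _ ≤ (j + 2^h) * 2^u := Nat.mul_le_mul_right _ (by omega)
    have hB1 : (2:ℕ)^(h+1+u) ≤ 2^(2*h+1) := hpow _ _ (by omega)
    have hB2 : (2:ℕ) ≤ 2^u := by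
      calc (2:ℕ) = 2^1 := (pow_one 2).symm
        _ ≤ 2^u := hpow _ _ (by omega)
    set X := (j + 2^h) * 2^u with hX
    have hXv : X < 2^(2*h+1) - 1 := by omega
    rw [Nat.mod_eq_of_lt hXv] at heq
    omega
  · -- h+1 ≤ u ≤ 2h
    exfalso
    set w := u - h with hw
    have hw1 : 1 ≤ w := by omega
    have hwh : w ≤ h := by omega
    have hu' : u = h + w := by omega
    have hjd : 2^(h+1-w) * (j / 2^(h+1-w)) + j % 2^(h+1-w) = j := Nat.div_add_mod _ _
    set j1 := j / 2^(h+1-w) with hj1def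
    set j0 := j % 2^(h+1-w) with hj0def
    have hd : (2:ℕ)^(h+1-w) * 2^(h+w) = 2^(2*h+1) := by
      rw [← pow_add]; congr 1; omega
    have h2h : (2:ℕ)^h * 2^(h+w) = 2^(w-1) * 2^(2*h+1) := by
      rw [← pow_add, ← pow_add]; congr 1; omega
    have E : (j + 2^h) * 2^(h+w)
        = j1 * 2^(2*h+1) + j0 * 2^(h+w) + 2^(w-1) * 2^(2*h+1) := by
      calc (j + 2^h) * 2^(h+w)
          = (2^(h+1-w) * j1 + j0 + 2^h) * 2^(h+w) := by rw [hjd]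
        _ = j1 * (2^(h+1-w) * 2^(h+w)) + j0 * 2^(h+w) + 2^h * 2^(h+w) := by ring
        _ = j1 * 2^(2*h+1) + j0 * 2^(h+w) + 2^(w-1) * 2^(2*h+1) := by rw [hd, h2h]
    have hV1 : 1 ≤ (2:ℕ)^(2*h+1) := Nat.one_le_two_pow
    have hcv : (j1 + 2^(w-1)) * (2^(2*h+1) - 1) + (j1 + 2^(w-1))
        = (j1 + 2^(w-1)) * 2^(2*h+1) := by
      calc (j1 + 2^(w-1)) * (2^(2*h+1) - 1) + (j1 + 2^(w-1))
          = (j1 + 2^(w-1)) * ((2^(2*h+1) - 1) + 1) := by rw [Nat.mul_succ]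
        _ = (j1 + 2^(w-1)) * 2^(2*h+1) := by rw [Nat.sub_add_cancel hV1]
    have E2 : (j + 2^h) * 2^u
        = (j1 + 2^(w-1) + j0 * 2^(h+w)) + (j1 + 2^(w-1)) * (2^(2*h+1) - 1) := by
      rw [hu']
      calc (j + 2^h) * 2^(h+w)
          = j1 * 2^(2*h+1) + j0 * 2^(h+w) + 2^(w-1) * 2^(2*h+1) := E
        _ = j0 * 2^(h+w) + (j1 + 2^(w-1)) * 2^(2*h+1) := by ring
        _ = j0 * 2^(h+w) + ((j1 + 2^(w-1)) * (2^(2*h+1) - 1) + (j1 + 2^(w-1))) := by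
            rw [hcv]
        _ = (j1 + 2^(w-1) + j0 * 2^(h+w)) + (j1 + 2^(w-1)) * (2^(2*h+1) - 1) := by ring
    -- bounds
    have hdpos : 0 < (2:ℕ)^(h+1-w) := by positivity
    have hj1w : j1 < 2^(w-1) := by
      rw [hj1def, Nat.div_lt_iff_lt_mul hdpos]
      have : (2:ℕ)^(w-1) * 2^(h+1-w) = 2^h := by rw [← pow_add]; congr 1; omega
      rw [this]
      have : (2:ℕ)^(h-1) ≤ 2^h := hpow _ _ (by omega)
      omega
    have hj0lt : j0 < 2^(h+1-w) := Nat.mod_lt _ hdpos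
    have hj0P : j0 * 2^(h+w) + 2^(h+w) ≤ 2^(2*h+1) := by
      have h1 : (j0 + 1) * 2^(h+w) ≤ 2^(h+1-w) * 2^(h+w) :=
        Nat.mul_le_mul_right _ (by omega)
      rw [hd] at h1
      calc j0 * 2^(h+w) + 2^(h+w) = (j0 + 1) * 2^(h+w) := by ring
        _ ≤ 2^(2*h+1) := h1
    have h4w : 4 * 2^(w-1) ≤ 2^(h+w) := by
      have : (2:ℕ)^(w+1) ≤ 2^(h+w) := hpow _ _ (by omega)
      have h2 : (2:ℕ)^(w+1) = 4 * 2^(w-1) := by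
        rw [show w + 1 = (w-1) + 2 by omega, pow_add]; ring
      omega
    have hwh2 : 2 * 2^(w-1) ≤ 2^h := by
      have h1 : (2:ℕ)^w ≤ 2^h := hpow _ _ hwh
      have h2 : 2 * (2:ℕ)^(w-1) = 2^w := by
        rw [← pow_succ']; congr 1; omega
      omega
    have hhw : 2 * 2^h ≤ 2^(h+w) := by
      have : (2:ℕ)^(h+1) ≤ 2^(h+w) := hpow _ _ (by omega)
      omega
    have hTv : j1 + 2^(w-1) + j0 * 2^(h+w) < 2^(2*h+1) - 1 := by
      have h0 : j0 * 2^(h+w) + 2^(h+w) ≤ 2^(2*h+1) := hj0P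
      set x2 := j0 * 2^(h+w) with hx2
      omega
    rw [E2, Nat.add_mul_mod_self_right, Nat.mod_eq_of_lt hTv] at heq
    have hx2cases : j0 * 2^(h+w) = 0 ∨ 2^(h+w) ≤ j0 * 2^(h+w) := by
      rcases Nat.eq_zero_or_pos j0 with h0 | h0
      · left; rw [h0, zero_mul]
      · right; exact Nat.le_mul_of_pos_left _ h0
    set x2 := j0 * 2^(h+w) with hx2
    clear hx2 E E2 hcv hjd hd h2h hj0P hTv hj1def hj0def hdpos hj0lt
    rcases hx2cases with h0 | h0
    · rw [h0, add_zero] at heq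
      linarith [hj1w, hwh2, hi1, heq]
    · have h1 : 2 * 2^h ≤ x2 := le_trans hhw h0
      linarith [heq, h1, hi2, h56, Nat.zero_le j1, Nat.zero_le (2^(w-1))]

/-- Let m ≥ 5 be odd, h = (m−1)/2, and A = {1, …, 2^{h−1} − 1}. For any
i, j ∈ A with i ≠ j, C_{i+2^h} ∩ C_{j+2^h} = ∅ (cosets modulo 2^m − 1). -/
theorem stmt7 (m h : ℕ) (hmo : Odd m) (hm5 : 5 ≤ m) (hh : h = (m - 1) / 2)
    (i j : ℕ) (hi1 : 1 ≤ i) (hi2 : i ≤ 2 ^ (h - 1) - 1)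
    (hj1 : 1 ≤ j) (hj2 : j ≤ 2 ^ (h - 1) - 1) (hij : i ≠ j) :
    cosetC (2 ^ m - 1) (i + 2 ^ h) ∩ cosetC (2 ^ m - 1) (j + 2 ^ h) = ∅ := by
  obtain ⟨k, hk⟩ := hmo
  have hm : m = 2*h + 1 := by omega
  subst hm
  have hh2 : 2 ≤ h := by omega
  have hpow : ∀ a b : ℕ, a ≤ b → (2:ℕ)^a ≤ 2^b := fun a b hab =>
    Nat.pow_le_pow_right (by norm_num) hab
  set v := 2^(2*h+1) - 1 with hv
  have hV1 : 1 ≤ (2:ℕ)^(2*h+1) := Nat.one_le_two_pow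
  have hV32 : (32:ℕ) ≤ 2^(2*h+1) := by
    calc (32:ℕ) = 2^5 := by norm_num
      _ ≤ 2^(2*h+1) := hpow _ _ (by omega)
  rw [Set.eq_empty_iff_forall_notMem]
  rintro x ⟨⟨s, hs⟩, ⟨t, ht⟩⟩
  have one : (2:ℕ)^(2*h+1) ≡ 1 [MOD v] := by
    show 2^(2*h+1) % v = 1 % v
    have h1 : 2^(2*h+1) = v + 1 := by omega
    rw [h1, Nat.add_mod_left]
  have powk : ∀ c : ℕ, (2:ℕ)^((2*h+1)*c) ≡ 1 [MOD v] := by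
    intro c
    have := one.pow c
    rwa [← pow_mul, one_pow] at this
  have h1 : (i + 2^h) * 2^s ≡ (j + 2^h) * 2^t [MOD v] := by
    show _ % v = _ % v
    rw [← hs, ← ht]
  set N := (2*h+1) * (s+1) with hN
  have hNs : s ≤ N := by
    have h0 : s + 1 ≤ (2*h+1) * (s+1) := Nat.le_mul_of_pos_left _ (by omega)
    omega
  set U := t + (N - s) with hU
  have h2 : (i + 2^h) * 2^N ≡ (j + 2^h) * 2^U [MOD v] := by
    have h3 := h1.mul_right (2^(N - s))
    have e1 : (i + 2^h) * 2^s * 2^(N-s) = (i + 2^h) * 2^N := by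
      rw [mul_assoc, ← pow_add, Nat.add_sub_cancel' hNs]
    have e2 : (j + 2^h) * 2^t * 2^(N-s) = (j + 2^h) * 2^U := by
      rw [mul_assoc, ← pow_add]
    rwa [e1, e2] at h3
  have h3 : (i + 2^h) ≡ (i + 2^h) * 2^N [MOD v] := by
    have := (powk (s+1)).mul_left (i + 2^h)
    rw [mul_one] at this
    exact this.symm
  have h4 : (j + 2^h) * 2^U ≡ (j + 2^h) * 2^(U % (2*h+1)) [MOD v] := by
    have e3 : (2:ℕ)^U = 2^((2*h+1) * (U / (2*h+1))) * 2^(U % (2*h+1)) := by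
      rw [← pow_add, Nat.div_add_mod]
    have h5 := ((powk (U / (2*h+1))).mul_right (2^(U % (2*h+1)))).mul_left (j + 2^h)
    rw [one_mul, ← e3] at h5
    exact h5
  have h5 : (i + 2^h) ≡ (j + 2^h) * 2^(U % (2*h+1)) [MOD v] := (h3.trans h2).trans h4
  have hp1 : 1 ≤ (2:ℕ)^(h-1) := Nat.one_le_two_pow
  have h56 : 2 * 2^(h-1) = 2^h := by rw [← pow_succ']; congr 1; omega
  have hh2h : (2:ℕ)^(h+2) ≤ 2^(2*h+1) := hpow _ _ (by omega)
  have hh2e : (2:ℕ)^(h+2) = 4 * 2^h := by rw [pow_add]; ring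
  have hiv : i + 2^h < v := by omega
  have heq : i + 2^h = ((j + 2^h) * 2^(U % (2*h+1))) % v := by
    have h6 : (i + 2^h) % v = ((j + 2^h) * 2^(U % (2*h+1))) % v := h5
    rwa [Nat.mod_eq_of_lt hiv] at h6
  have humod : U % (2*h+1) ≤ 2*h := by
    have := Nat.mod_lt U (show 0 < 2*h+1 by omega)
    omega
  exact hij (aux7 h i j (U % (2*h+1)) hh2 hi1 (by omega) (by omega) humod heq)
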